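/- Let f be a polymatroid rank function on a finite ground set E with |E| = n. For each permutation π of E, let x(π) ∈ ℝ^E be the greedy vector defined by x(π)_{π(j)} = f({π(1), …, π(j)}) − f({π(1), …, π(j−1)}) for 1 ≤ j ≤ n. Then the set of extreme points of the base polytope B(f) coincides exactly with the set { x(π) : π a permutation of E }. -/

import Mathlib

set_option linter.unusedSectionVars false
set_option linter.unusedVariables false


/-- The independence polytope of a set function on a finite ground set. -/
def indepP {E : Type*} [Fintype E] (f : Finset E → ℝ) : Set (E → ℝ) :=
  {x | (∀ i, 0 ≤ x i) ∧ ∀ S : Finset E, ∑ i ∈ S, x i ≤ f S}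

/-- The base polytope of a set function on a finite ground set. -/
def baseB {E : Type*} [Fintype E] (f : Finset E → ℝ) : Set (E → ℝ) :=
  {x ∈ indepP f | ∑ i, x i = f Finset.univ}

namespace Stmt14Aux

variable {E : Type*} [Fintype E] [DecidableEq E]

/-- prefix set of the first `k` elements in the order `π`. -/
def gSet {n : ℕ} (π : Fin n ≃ E) (k : ℕ) : Finset E :=
  (Finset.univ.filter fun t : Fin n => (t : ℕ) < k).image (fun t => π t)

lemma gSet_zero {n : ℕ} (π : Fin n ≃ E) : gSet π 0 = ∅ := by
  simp [gSet]

lemma gSet_top {n : ℕ} (π : Fin n ≃ E) (hn : Fintype.card E = n) :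
    gSet π n = Finset.univ := by
  apply Finset.eq_univ_iff_forall.2
  intro e
  refine Finset.mem_image.2 ⟨π.symm e, ?_, by simp⟩
  simp [Fin.is_lt]

lemma gSet_succ {n : ℕ} (π : Fin n ≃ E) {k : ℕ} (hk : k < n) :
    gSet π (k + 1) = insert (π ⟨k, hk⟩) (gSet π k) := by
  ext e
  simp only [gSet, Finset.mem_image, Finset.mem_filter, Finset.mem_univ, true_and,
    Finset.mem_insert]
  constructor
  · rintro ⟨t, ht, rfl⟩
    rcases Nat.lt_succ_iff_lt_or_eq.1 ht with h | h
    · exact Or.inr ⟨t, h, rfl⟩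
    · exact Or.inl (by congr 1; exact Fin.ext h)
  · rintro (rfl | ⟨t, ht, rfl⟩)
    · exact ⟨⟨k, hk⟩, Nat.lt_succ_self k, rfl⟩
    · exact ⟨t, Nat.lt_succ_of_lt ht, rfl⟩

lemma gSet_succ_of_ge {n : ℕ} (π : Fin n ≃ E) {k : ℕ} (hk : n ≤ k) :
    gSet π (k + 1) = gSet π k := by
  unfold gSet
  congr 1
  apply Finset.filter_congr
  intro t _
  have := t.is_lt
  constructor
  · intro _; omega
  · intro h; omega

lemma not_mem_gSet {n : ℕ} (π : Fin n ≃ E) {k : ℕ} (hk : k < n) :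
    π ⟨k, hk⟩ ∉ gSet π k := by
  simp only [gSet, Finset.mem_image, Finset.mem_filter, Finset.mem_univ, true_and, not_exists]
  rintro t ⟨ht, hπ⟩
  have : t = ⟨k, hk⟩ := π.injective hπ
  subst this
  exact lt_irrefl _ ht

lemma gSet_mono {n : ℕ} (π : Fin n ≃ E) {k l : ℕ} (h : k ≤ l) :
    gSet π k ⊆ gSet π l := by
  apply Finset.image_subset_image
  intro t ht
  exact Finset.mem_filter.2 ⟨Finset.mem_univ _,
    lt_of_lt_of_le (Finset.mem_filter.1 ht).2 h⟩

lemma image_le_eq {n : ℕ} (π : Fin n ≃ E) (j : Fin n) :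
    (Finset.univ.filter (fun t => t ≤ j)).image (fun t => π t) = gSet π (j.val + 1) := by
  unfold gSet
  congr 1
  apply Finset.filter_congr
  intro t _
  simp only [eq_iff_iff, Fin.le_def]
  omega

lemma image_lt_eq {n : ℕ} (π : Fin n ≃ E) (j : Fin n) :
    (Finset.univ.filter (fun t => t < j)).image (fun t => π t) = gSet π j.val := by
  unfold gSet
  congr 1

section Greedy

variable (f : Finset E → ℝ) {n : ℕ} (π : Fin n ≃ E) (x : E → ℝ)

lemma sum_gSet (hf0 : f ∅ = 0)
    (hx : ∀ j : Fin n, x (π j) = f (gSet π (j.val + 1)) - f (gSet π j.val))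
    (k : ℕ) : ∑ i ∈ gSet π k, x i = f (gSet π k) := by
  induction k with
  | zero => simp [gSet_zero, hf0]
  | succ k ih =>
    by_cases hk : k < n
    · rw [gSet_succ π hk, Finset.sum_insert (not_mem_gSet π hk), ih,
        hx ⟨k, hk⟩]
      ring_nf
      rw [← gSet_succ π hk]
      ring
    · rw [gSet_succ_of_ge π (le_of_not_gt hk)]; exact ih

lemma greedy_sum_le (hf0 : f ∅ = 0)
    (hfsub : ∀ A B : Finset E, f (A ∪ B) + f (A ∩ B) ≤ f A + f B)
    (hn : Fintype.card E = n)
    (hx : ∀ j : Fin n, x (π j) = f (gSet π (j.val + 1)) - f (gSet π j.val))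
    (S : Finset E) : ∑ i ∈ S, x i ≤ f S := by
  have key : ∀ k : ℕ, ∑ i ∈ S ∩ gSet π k, x i ≤ f (S ∩ gSet π k) := by
    intro k
    induction k with
    | zero => simp [gSet_zero, hf0]
    | succ k ih =>
      by_cases hk : k < n
      · set e := π ⟨k, hk⟩ with he
        by_cases heS : e ∈ S
        · have h1 : S ∩ gSet π (k + 1) = insert e (S ∩ gSet π k) := by
            rw [gSet_succ π hk]
            ext i
            simp only [Finset.mem_inter, Finset.mem_insert]
            constructor
            · rintro ⟨hi, rfl | hg⟩
              · exact Or.inl rfl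
              · exact Or.inr ⟨hi, hg⟩
            · rintro (rfl | ⟨hi, hg⟩)
              · exact ⟨heS, Or.inl rfl⟩
              · exact ⟨hi, Or.inr hg⟩
          have hnot : e ∉ S ∩ gSet π k := fun h =>
            not_mem_gSet π hk (Finset.mem_inter.1 h).2
          have hsub1 : insert e (S ∩ gSet π k) ∪ gSet π k = gSet π (k + 1) := by
            rw [gSet_succ π hk]
            ext i
            simp only [Finset.mem_union, Finset.mem_insert, Finset.mem_inter]
            tauto
          have hsub2 : insert e (S ∩ gSet π k) ∩ gSet π k = S ∩ gSet π k := by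
            ext i
            have := not_mem_gSet π hk
            simp only [Finset.mem_inter, Finset.mem_insert]
            constructor
            · rintro ⟨rfl | hi, hg⟩
              · exact absurd hg this
              · exact hi
            · rintro ⟨hi, hg⟩
              exact ⟨Or.inr ⟨hi, hg⟩, hg⟩
          have hsm := hfsub (insert e (S ∩ gSet π k)) (gSet π k)
          rw [hsub1, hsub2] at hsm
          rw [h1, Finset.sum_insert hnot]
          have hxe : x e = f (gSet π (k + 1)) - f (gSet π k) := hx ⟨k, hk⟩
          linarith
        · have h1 : S ∩ gSet π (k + 1) = S ∩ gSet π k := by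
            rw [gSet_succ π hk]
            ext i
            simp only [Finset.mem_inter, Finset.mem_insert]
            constructor
            · rintro ⟨hi, rfl | hg⟩
              · exact absurd hi heS
              · exact ⟨hi, hg⟩
            · rintro ⟨hi, hg⟩
              exact ⟨hi, Or.inr hg⟩
          rw [h1]; exact ih
      · rw [gSet_succ_of_ge π (le_of_not_gt hk)]; exact ih
  have := key n
  rwa [gSet_top π hn, Finset.inter_univ] at this

lemma greedy_mem_baseB (hf0 : f ∅ = 0)
    (hfmono : ∀ A B : Finset E, A ⊆ B → f A ≤ f B)
    (hfsub : ∀ A B : Finset E, f (A ∪ B) + f (A ∩ B) ≤ f A + f B)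
    (hn : Fintype.card E = n)
    (hx : ∀ j : Fin n, x (π j) = f (gSet π (j.val + 1)) - f (gSet π j.val)) :
    x ∈ baseB f := by
  refine ⟨⟨?_, greedy_sum_le f π x hf0 hfsub hn hx⟩, ?_⟩
  · intro i
    have h := hx (π.symm i)
    rw [Equiv.apply_symm_apply] at h
    rw [h, sub_nonneg]
    exact hfmono _ _ (gSet_mono π (Nat.le_succ _))
  · have := sum_gSet f π x hf0 hx n
    rwa [gSet_top π hn] at this

lemma greedy_extremePoint (hf0 : f ∅ = 0)
    (hfmono : ∀ A B : Finset E, A ⊆ B → f A ≤ f B)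
    (hfsub : ∀ A B : Finset E, f (A ∪ B) + f (A ∩ B) ≤ f A + f B)
    (hn : Fintype.card E = n)
    (hx : ∀ j : Fin n, x (π j) = f (gSet π (j.val + 1)) - f (gSet π j.val)) :
    x ∈ Set.extremePoints ℝ (baseB f) := by
  refine ⟨greedy_mem_baseB f π x hf0 hfmono hfsub hn hx, ?_⟩
  intro y hy z hz hseg
  obtain ⟨a, b, ha, hb, hab, heq⟩ := hseg
  -- tightness on every prefix set
  have tight : ∀ (w : E → ℝ), w ∈ baseB f → (∀ k, a * ∑ i ∈ gSet π k, y i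
      + b * ∑ i ∈ gSet π k, z i = f (gSet π k)) →
      ∀ k, ∑ i ∈ gSet π k, w i ≤ f (gSet π k) := fun w hw _ k => hw.1.2 _
  have hsum : ∀ k, a * ∑ i ∈ gSet π k, y i + b * ∑ i ∈ gSet π k, z i
      = f (gSet π k) := by
    intro k
    have : ∑ i ∈ gSet π k, x i = f (gSet π k) := sum_gSet f π x hf0 hx k
    have hxi : ∀ i, x i = a * y i + b * z i := by
      intro i
      have := congrFun heq i
      simpa using this.symm
    calc a * ∑ i ∈ gSet π k, y i + b * ∑ i ∈ gSet π k, z i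
        = ∑ i ∈ gSet π k, (a * y i + b * z i) := by
          rw [Finset.sum_add_distrib, Finset.mul_sum, Finset.mul_sum]
      _ = ∑ i ∈ gSet π k, x i := Finset.sum_congr rfl (fun i _ => (hxi i).symm)
      _ = f (gSet π k) := this
  have tighty : ∀ k, ∑ i ∈ gSet π k, y i = f (gSet π k) := by
    intro k
    have h1 : ∑ i ∈ gSet π k, y i ≤ f (gSet π k) := hy.1.2 _
    have h2 : ∑ i ∈ gSet π k, z i ≤ f (gSet π k) := hz.1.2 _
    have h3 := hsum k
    by_contra hlt
    have h4 : a * ∑ i ∈ gSet π k, y i < a * f (gSet π k) :=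
      mul_lt_mul_of_pos_left (lt_of_le_of_ne h1 hlt) ha
    have h5 : b * ∑ i ∈ gSet π k, z i ≤ b * f (gSet π k) :=
      mul_le_mul_of_nonneg_left h2 hb.le
    have h6 : a * f (gSet π k) + b * f (gSet π k) = f (gSet π k) := by
      rw [← add_mul, hab, one_mul]
    linarith
  have tightz : ∀ k, ∑ i ∈ gSet π k, z i = f (gSet π k) := by
    intro k
    have h1 : ∑ i ∈ gSet π k, y i ≤ f (gSet π k) := hy.1.2 _
    have h2 : ∑ i ∈ gSet π k, z i ≤ f (gSet π k) := hz.1.2 _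
    have h3 := hsum k
    by_contra hlt
    have h4 : b * ∑ i ∈ gSet π k, z i < b * f (gSet π k) :=
      mul_lt_mul_of_pos_left (lt_of_le_of_ne h2 hlt) hb
    have h5 : a * ∑ i ∈ gSet π k, y i ≤ a * f (gSet π k) :=
      mul_le_mul_of_nonneg_left h1 ha.le
    have h6 : a * f (gSet π k) + b * f (gSet π k) = f (gSet π k) := by
      rw [← add_mul, hab, one_mul]
    linarith
  have eqcoord : ∀ (w : E → ℝ), (∀ k, ∑ i ∈ gSet π k, w i = f (gSet π k)) →
      w = x := by
    intro w hw
    funext i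
    have hi : i = π (π.symm i) := (Equiv.apply_symm_apply π i).symm
    rw [hi]
    set j := π.symm i with hj
    have h1 := hw (j.val + 1)
    have h2 := hw j.val
    rw [gSet_succ π j.is_lt, Finset.sum_insert (not_mem_gSet π j.is_lt)] at h1
    have : w (π ⟨j.val, j.is_lt⟩) = f (gSet π (j.val + 1)) - f (gSet π j.val) := by
      rw [← gSet_succ π j.is_lt] at h1
      linarith
    have hj2 : (⟨j.val, j.is_lt⟩ : Fin n) = j := Fin.ext rfl
    rw [hj2] at this
    rw [this, hx j]
  exact eqcoord y tighty

end Greedy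

section Forward

variable (f : Finset E → ℝ) (x : E → ℝ)

lemma tight_union_inter
    (hfsub : ∀ A B : Finset E, f (A ∪ B) + f (A ∩ B) ≤ f A + f B)
    (hxP : x ∈ indepP f) {S T : Finset E}
    (hS : ∑ i ∈ S, x i = f S) (hT : ∑ i ∈ T, x i = f T) :
    (∑ i ∈ S ∪ T, x i = f (S ∪ T)) ∧ (∑ i ∈ S ∩ T, x i = f (S ∩ T)) := by
  have h1 : ∑ i ∈ S ∪ T, x i + ∑ i ∈ S ∩ T, x i = ∑ i ∈ S, x i + ∑ i ∈ T, x i :=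
    Finset.sum_union_inter
  have h2 : ∑ i ∈ S ∪ T, x i ≤ f (S ∪ T) := hxP.2 _
  have h3 : ∑ i ∈ S ∩ T, x i ≤ f (S ∩ T) := hxP.2 _
  have h4 := hfsub S T
  constructor <;> linarith

/-- the perturbed vector `x + ε·(χ_a - χ_b)`. -/
def pert (x : E → ℝ) (a b : E) (ε : ℝ) : E → ℝ :=
  fun i => x i + (if i = a then ε else 0) - (if i = b then ε else 0)

lemma sum_pert (a b : E) (ε : ℝ) (S : Finset E) :
    ∑ i ∈ S, pert x a b ε i =
      ∑ i ∈ S, x i + (if a ∈ S then ε else 0) - (if b ∈ S then ε else 0) := by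
  unfold pert
  rw [Finset.sum_sub_distrib, Finset.sum_add_distrib,
    Finset.sum_ite_eq' S a (fun _ => ε), Finset.sum_ite_eq' S b (fun _ => ε)]

lemma pert_mem (hxB : x ∈ baseB f) (a b : E) (hab : a ≠ b) (hb : 0 < x b)
    (hsep : ∀ S : Finset E, ∑ i ∈ S, x i = f S → (a ∈ S ↔ b ∈ S)) :
    ∃ ε : ℝ, 0 < ε ∧ pert x a b ε ∈ baseB f := by
  classical
  set slack : Finset E → ℝ := fun S => f S - ∑ i ∈ S, x i with hslack
  set D : Finset (Finset E) :=
    Finset.univ.filter (fun S : Finset E => ∑ i ∈ S, x i < f S) with hD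
  set vals : Finset ℝ := insert (x b) (D.image slack) with hvals
  have hmem : x b ∈ vals := Finset.mem_insert_self _ _
  set ε : ℝ := vals.min' ⟨x b, hmem⟩ with hε
  have hεpos : 0 < ε := by
    have h := Finset.min'_mem vals ⟨x b, hmem⟩
    rw [← hε] at h
    rcases Finset.mem_insert.1 h with h | h
    · rw [h]; exact hb
    · obtain ⟨S, hS, hSe⟩ := Finset.mem_image.1 h
      have := (Finset.mem_filter.1 hS).2
      rw [← hSe]
      simp only [hslack]
      linarith
  have hεb : ε ≤ x b := Finset.min'_le _ _ hmem
  have hεS : ∀ S : Finset E, ∑ i ∈ S, x i < f S → ε ≤ f S - ∑ i ∈ S, x i := by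
    intro S hS
    apply Finset.min'_le
    apply Finset.mem_insert_of_mem
    exact Finset.mem_image.2 ⟨S, Finset.mem_filter.2 ⟨Finset.mem_univ _, hS⟩, rfl⟩
  refine ⟨ε, hεpos, ⟨⟨?_, ?_⟩, ?_⟩⟩
  · intro i
    have h0 := hxB.1.1 i
    unfold pert
    split_ifs with h1 h2 h2
    · linarith
    · linarith
    · subst h2; linarith
    · linarith
  · intro S
    rw [sum_pert]
    by_cases htS : ∑ i ∈ S, x i = f S
    · have hiff := hsep S htS
      by_cases haS : a ∈ S
      · rw [if_pos haS, if_pos (hiff.1 haS)]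
        linarith
      · rw [if_neg haS, if_neg (fun hbS => haS (hiff.2 hbS))]
        linarith
    · have hlt : ∑ i ∈ S, x i < f S := lt_of_le_of_ne (hxB.1.2 S) htS
      have h1 := hεS S hlt
      have h2 : (if a ∈ S then ε else 0) ≤ ε := by
        split <;> linarith
      have h3 : (0:ℝ) ≤ (if b ∈ S then ε else 0) := by
        split <;> linarith
      linarith
  · rw [sum_pert, if_pos (Finset.mem_univ a), if_pos (Finset.mem_univ b)]
    have := hxB.2
    simpa using this

lemma exists_step
    (hfmono : ∀ A B : Finset E, A ⊆ B → f A ≤ f B)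
    (hfsub : ∀ A B : Finset E, f (A ∪ B) + f (A ∩ B) ≤ f A + f B)
    (hx : x ∈ Set.extremePoints ℝ (baseB f)) (T : Finset E)
    (hT : ∑ i ∈ T, x i = f T) (hTu : T ≠ Finset.univ) :
    ∃ e, e ∉ T ∧ ∑ i ∈ insert e T, x i = f (insert e T) := by
  classical
  have hxB : x ∈ baseB f := hx.1
  set tightS : Finset E → Prop := fun S => ∑ i ∈ S, x i = f S with htightS
  set 𝒮 : Finset (Finset E) :=
    Finset.univ.filter (fun S : Finset E => tightS S ∧ T ⊂ S) with h𝒮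
  have huniv𝒮 : Finset.univ ∈ 𝒮 := by
    refine Finset.mem_filter.2 ⟨Finset.mem_univ _, ?_, ?_⟩
    · have := hxB.2
      simpa [tightS] using this
    · exact Finset.ssubset_univ_iff.2 hTu
  obtain ⟨T'', hT''mem, hmin⟩ :=
    Finset.exists_min_image 𝒮 (fun S => S.card) ⟨Finset.univ, huniv𝒮⟩
  have hT''tight : ∑ i ∈ T'', x i = f T'' := (Finset.mem_filter.1 hT''mem).2.1
  have hTT'' : T ⊂ T'' := (Finset.mem_filter.1 hT''mem).2.2
  -- no tight set separates two elements of the gap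
  have sep : ∀ a ∈ T'' \ T, ∀ b ∈ T'' \ T, ∀ S : Finset E,
      (∑ i ∈ S, x i = f S) → a ∈ S → b ∉ S → False := by
    intro a ha b hb S hStight haS hbS
    obtain ⟨haT'', haT⟩ := Finset.mem_sdiff.1 ha
    obtain ⟨hbT'', hbT⟩ := Finset.mem_sdiff.1 hb
    set U : Finset E := (S ∩ T'') ∪ T with hU
    have hUtight : ∑ i ∈ U, x i = f U := by
      have h1 := (tight_union_inter f x hfsub hxB.1 hStight hT''tight).2
      exact (tight_union_inter f x hfsub hxB.1 h1 hT).1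
    have hU𝒮 : U ∈ 𝒮 := by
      refine Finset.mem_filter.2 ⟨Finset.mem_univ _, hUtight, ?_⟩
      constructor
      · exact Finset.subset_union_right
      · intro hsub
        exact haT (hsub (Finset.mem_union_left _ (Finset.mem_inter.2 ⟨haS, haT''⟩)))
    have hUT'' : U ⊂ T'' := by
      constructor
      · apply Finset.union_subset
        · exact Finset.inter_subset_right
        · exact hTT''.1
      · intro hsub
        have : b ∈ U := hsub hbT''
        rcases Finset.mem_union.1 this with h | h
        · exact hbS (Finset.mem_inter.1 h).1
        · exact hbT h
    have := hmin U hU𝒮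
    have := Finset.card_lt_card hUT''
    omega
  -- at most one positive coordinate in the gap
  have hpos : ∀ a ∈ T'' \ T, ∀ b ∈ T'' \ T, a ≠ b → ¬(0 < x a ∧ 0 < x b) := by
    rintro a ha b hb hab ⟨hxa, hxb⟩
    have hsep1 : ∀ S : Finset E, ∑ i ∈ S, x i = f S → (a ∈ S ↔ b ∈ S) := by
      intro S hS
      constructor
      · intro haS; by_contra hbS; exact sep a ha b hb S hS haS hbS
      · intro hbS; by_contra haS; exact sep b hb a ha S hS hbS haS
    have hsep2 : ∀ S : Finset E, ∑ i ∈ S, x i = f S → (b ∈ S ↔ a ∈ S) :=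
      fun S hS => (hsep1 S hS).symm
    obtain ⟨ε₁, hε₁, hy⟩ := pert_mem f x hxB a b hab hxb hsep1
    obtain ⟨ε₂, hε₂, hz⟩ := pert_mem f x hxB b a hab.symm hxa hsep2
    have hsumpos : (0:ℝ) < ε₁ + ε₂ := by linarith
    have hne : ε₁ + ε₂ ≠ 0 := ne_of_gt hsumpos
    have hseg : x ∈ openSegment ℝ (pert x a b ε₁) (pert x b a ε₂) := by
      refine ⟨ε₂ / (ε₁ + ε₂), ε₁ / (ε₁ + ε₂), by positivity, by positivity, ?_, ?_⟩
      · rw [← add_div, add_comm ε₂ ε₁, div_self hne]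
      · funext i
        simp only [Pi.add_apply, Pi.smul_apply, smul_eq_mul, pert]
        by_cases hia : i = a
        · subst hia
          rw [if_pos rfl, if_neg hab, if_neg hab, if_pos rfl]
          field_simp
          ring
        · by_cases hib : i = b
          · subst hib
            rw [if_neg hia, if_pos rfl, if_pos rfl, if_neg (fun h => hia h)]
            field_simp
            ring
          · rw [if_neg hia, if_neg hib, if_neg hib, if_neg hia]
            field_simp
            ring
    have := (hx.2 hy hz hseg)
    have hcontra := congrFun this a
    simp only [pert, if_pos rfl, if_neg hab, if_true] at hcontra
    linarith
  -- the set of positive gap elements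
  set P : Finset E := (T'' \ T).filter (fun i => 0 < x i) with hP
  have hPcard : P.card ≤ 1 := by
    apply Finset.card_le_one.2
    intro a ha b hb
    by_contra hne
    obtain ⟨ha1, ha2⟩ := Finset.mem_filter.1 ha
    obtain ⟨hb1, hb2⟩ := Finset.mem_filter.1 hb
    exact hpos a ha1 b hb1 hne ⟨ha2, hb2⟩
  have hTsub : T ⊆ T'' := hTT''.1
  have hzero : ∀ i ∈ T'' \ T, i ∉ P → x i = 0 := by
    intro i hi hiP
    have h1 := hxB.1.1 i
    by_contra h
    exact hiP (Finset.mem_filter.2 ⟨hi, lt_of_le_of_ne h1 (Ne.symm h)⟩)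
  have hsumgap : ∑ i ∈ T'' \ T, x i = ∑ i ∈ P, x i := by
    rw [hP]
    exact (Finset.sum_filter_of_ne (fun i hi h => by
      by_contra hc
      exact h (hzero i hi (fun hiP => hc (Finset.mem_filter.1 hiP).2)))).symm
  have hsplit : ∑ i ∈ T'' \ T, x i + ∑ i ∈ T, x i = ∑ i ∈ T'', x i :=
    Finset.sum_sdiff hTsub
  have hPdisj : Disjoint T P := by
    apply Finset.disjoint_left.2
    intro i hiT hiP
    exact (Finset.mem_sdiff.1 (Finset.mem_filter.1 hiP).1).2 hiT
  have hTP : ∑ i ∈ T ∪ P, x i = f T'' := by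
    rw [Finset.sum_union hPdisj]
    rw [← hsumgap]
    linarith
  have hTPsub : T ∪ P ⊆ T'' := by
    apply Finset.union_subset hTsub
    intro i hi
    exact (Finset.mem_sdiff.1 (Finset.mem_filter.1 hi).1).1
  have hTPtight : ∑ i ∈ T ∪ P, x i = f (T ∪ P) ∧ f (T ∪ P) = f T'' := by
    have h1 : ∑ i ∈ T ∪ P, x i ≤ f (T ∪ P) := hxB.1.2 _
    have h2 : f (T ∪ P) ≤ f T'' := hfmono _ _ hTPsub
    constructor <;> linarith
  obtain ⟨c, hc, hcT⟩ := Finset.exists_of_ssubset hTT''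
  by_cases hPne : P.Nonempty
  · obtain ⟨p, hp⟩ := hPne
    have hPsing : P = {p} :=
      Finset.eq_singleton_iff_unique_mem.2
        ⟨hp, fun q hq => Finset.card_le_one.1 hPcard q hq p hp⟩
    have hpT : p ∉ T := (Finset.mem_sdiff.1 (Finset.mem_filter.1 hp).1).2
    refine ⟨p, hpT, ?_⟩
    have h1 := hTPtight.1
    have hins : ({p} : Finset E) ∪ T = insert p T := by
      ext i; simp [Finset.mem_union, Finset.mem_insert]
    rwa [hPsing, Finset.union_comm, hins] at h1
  · have hPempty : P = ∅ := Finset.not_nonempty_iff_eq_empty.1 hPne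
    have hfT : f T = f T'' := by
      have h2 := hTPtight.2
      rwa [hPempty, Finset.union_empty] at h2
    have hxc : x c = 0 := hzero c (Finset.mem_sdiff.2 ⟨hc, hcT⟩)
      (by rw [hPempty]; exact Finset.notMem_empty c)
    refine ⟨c, hcT, ?_⟩
    have hsum : ∑ i ∈ insert c T, x i = f T := by
      rw [Finset.sum_insert hcT, hxc, hT]; ring
    have hle1 : f T ≤ f (insert c T) := hfmono _ _ (Finset.subset_insert _ _)
    have hle2 : f (insert c T) ≤ f T'' := hfmono _ _ (Finset.insert_subset hc hTsub)
    have heq : f (insert c T) = f T := by linarith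
    rw [hsum, heq]

lemma exists_chain (hf0 : f ∅ = 0)
    (hfmono : ∀ A B : Finset E, A ⊆ B → f A ≤ f B)
    (hfsub : ∀ A B : Finset E, f (A ∪ B) + f (A ∩ B) ≤ f A + f B)
    (hx : x ∈ Set.extremePoints ℝ (baseB f)) {n : ℕ} (hn : Fintype.card E = n) :
    ∃ C : ℕ → Finset E, C 0 = ∅ ∧ (∀ m, m < n → C m ⊆ C (m + 1)) ∧
      ∀ m, m ≤ n → (C m).card = m ∧ ∑ i ∈ C m, x i = f (C m) := by
  suffices h : ∀ k, k ≤ n → ∃ C : ℕ → Finset E, C 0 = ∅ ∧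
      (∀ m, m < k → C m ⊆ C (m + 1)) ∧
      ∀ m, m ≤ k → (C m).card = m ∧ ∑ i ∈ C m, x i = f (C m) from h n le_rfl
  intro k
  induction k with
  | zero =>
    intro _
    refine ⟨fun _ => ∅, rfl, fun m hm => absurd hm (Nat.not_lt_zero m), ?_⟩
    intro m hm
    have : m = 0 := Nat.le_zero.1 hm
    subst this
    simp [hf0]
  | succ k ih =>
    intro hk1
    obtain ⟨C, hC0, hmono, hprop⟩ := ih (Nat.le_of_succ_le hk1)
    have hCk := hprop k le_rfl
    have hCkne : C k ≠ Finset.univ := by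
      intro h
      have hcard := hCk.1
      rw [h, Finset.card_univ, hn] at hcard
      omega
    obtain ⟨e, heC, hetight⟩ := exists_step f x hfmono hfsub hx (C k) hCk.2 hCkne
    refine ⟨fun m => if m = k + 1 then insert e (C k) else C m, ?_, ?_, ?_⟩
    · simp [hC0]
    · intro m hm
      simp only []
      rw [if_neg (by omega : ¬ m = k + 1)]
      by_cases hmk : m + 1 = k + 1
      · rw [if_pos hmk]
        have : m = k := by omega
        subst this
        exact Finset.subset_insert _ _
      · rw [if_neg hmk]
        exact hmono m (by omega)
    · intro m hm
      simp only []
      by_cases hmk : m = k + 1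
      · subst hmk
        rw [if_pos rfl]
        refine ⟨?_, hetight⟩
        rw [Finset.card_insert_of_notMem heC, hCk.1]
      · rw [if_neg hmk]
        exact hprop m (by omega)

end Forward

end Stmt14Aux

/-- the extreme points of the base polytope of a polymatroid
rank function are exactly the greedy vectors over all orderings of the
ground set. -/
theorem stmt_14 {E : Type*} [Fintype E] [DecidableEq E]
    (f : Finset E → ℝ)
    (hf0 : f ∅ = 0)
    (hfmono : ∀ A B : Finset E, A ⊆ B → f A ≤ f B)
    (hfsub : ∀ A B : Finset E, f (A ∪ B) + f (A ∩ B) ≤ f A + f B)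
    (n : ℕ) (hn : Fintype.card E = n) :
    Set.extremePoints ℝ (baseB f) =
      {x : E → ℝ | ∃ π : Fin n ≃ E, ∀ j : Fin n, x (π j) =
        f ((Finset.univ.filter (fun t => t ≤ j)).image (fun t => π t)) -
          f ((Finset.univ.filter (fun t => t < j)).image (fun t => π t))} := by
  ext x
  simp only [Set.mem_setOf_eq]
  constructor
  · intro hx
    obtain ⟨C, hC0, hmono, hprop⟩ := Stmt14Aux.exists_chain f x hf0 hfmono hfsub hx hn
    have hmono' : ∀ m m', m ≤ m' → m' ≤ n → C m ⊆ C m' := by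
      intro m m' hmm'
      induction m' with
      | zero =>
        intro _
        have : m = 0 := by omega
        subst this
        exact subset_rfl
      | succ m' ih =>
        intro hm'n
        by_cases h : m = m' + 1
        · subst h; exact subset_rfl
        · exact (ih (by omega) (by omega)).trans (hmono m' (by omega))
    have hgap : ∀ j : Fin n, ∃ a, C (j.val + 1) \ C j.val = {a} := by
      intro j
      have h1 := (hprop j.val (le_of_lt j.is_lt)).1
      have h2 := (hprop (j.val + 1) (Nat.succ_le_of_lt j.is_lt)).1
      have hsub := hmono j.val j.is_lt
      have hcard : (C (j.val + 1) \ C j.val).card = 1 := by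
        rw [Finset.card_sdiff_of_subset hsub, h1, h2]
        omega
      exact Finset.card_eq_one.1 hcard
    choose g hg using hgap
    have hgmem : ∀ j : Fin n, g j ∈ C (j.val + 1) \ C j.val := by
      intro j; rw [hg j]; exact Finset.mem_singleton_self _
    have hCsucc : ∀ j : Fin n, C (j.val + 1) = insert (g j) (C j.val) := by
      intro j
      ext i
      constructor
      · intro hi
        by_cases hiC : i ∈ C j.val
        · exact Finset.mem_insert_of_mem hiC
        · have hsd : i ∈ C (j.val + 1) \ C j.val := Finset.mem_sdiff.2 ⟨hi, hiC⟩
          rw [hg j] at hsd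
          exact Finset.mem_insert.2 (Or.inl (Finset.mem_singleton.1 hsd))
      · intro hi
        rcases Finset.mem_insert.1 hi with rfl | hi
        · exact (Finset.mem_sdiff.1 (hgmem j)).1
        · exact hmono j.val j.is_lt hi
    have hginj : Function.Injective g := by
      have hlem : ∀ (a b : Fin n), a < b → g a ≠ g b := by
        intro a b hab heq
        have h1 : g a ∈ C (a.val + 1) := (Finset.mem_sdiff.1 (hgmem a)).1
        have h2 : g b ∉ C b.val := (Finset.mem_sdiff.1 (hgmem b)).2
        have hsub : C (a.val + 1) ⊆ C b.val :=
          hmono' (a.val + 1) b.val (by exact Fin.lt_def.1 hab) (le_of_lt b.is_lt)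
        exact h2 (heq ▸ hsub h1)
      intro j j' hjj'
      by_contra hne
      rcases lt_or_gt_of_ne hne with h | h
      · exact hlem j j' h hjj'
      · exact hlem j' j h hjj'.symm
    have hbij : Function.Bijective g :=
      (Fintype.bijective_iff_injective_and_card g).2 ⟨hginj, by simp [hn]⟩
    set π : Fin n ≃ E := Equiv.ofBijective g hbij with hπdef
    have hπg : ∀ j, π j = g j := fun j => rfl
    have hCg : ∀ m, m ≤ n → Stmt14Aux.gSet π m = C m := by
      intro m
      induction m with
      | zero => intro _; rw [Stmt14Aux.gSet_zero, hC0]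
      | succ m ih =>
        intro hm
        have hmn : m < n := hm
        rw [Stmt14Aux.gSet_succ π hmn, ih (le_of_lt hmn)]
        have hs := hCsucc ⟨m, hmn⟩
        rw [hs]
        rfl
    refine ⟨π, ?_⟩
    intro j
    rw [Stmt14Aux.image_le_eq, Stmt14Aux.image_lt_eq,
      hCg (j.val + 1) (Nat.succ_le_of_lt j.is_lt), hCg j.val (le_of_lt j.is_lt)]
    have h1 := (hprop (j.val + 1) (Nat.succ_le_of_lt j.is_lt)).2
    have h2 := (hprop j.val (le_of_lt j.is_lt)).2
    have hnot : g j ∉ C j.val := (Finset.mem_sdiff.1 (hgmem j)).2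
    have h3 : x (g j) + ∑ i ∈ C j.val, x i = f (C (j.val + 1)) := by
      rw [← h1, hCsucc j, Finset.sum_insert hnot]
    rw [hπg j]
    linarith
  · rintro ⟨π, hπ⟩
    apply Stmt14Aux.greedy_extremePoint f π x hf0 hfmono hfsub hn
    intro j
    rw [← Stmt14Aux.image_le_eq, ← Stmt14Aux.image_lt_eq]
    exact hπ j
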